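/- Let a ≠ 0 and define φ(s) = a·s + (1-s²)/(a·s + 2·sqrt(1-s²)) for |s| < 1 on an interval where a·s + 2·sqrt(1-s²) > 0. Then Q(s) = φ'(s)/(φ(s) - s·φ'(s)) equals (3a/2)·sqrt(1-s²) + ((a²-2)/2)·s. -/

import Mathlib

open Real

theorem stmt_7 (a : ℝ) (ha : a ≠ 0) (φ : ℝ → ℝ)
    (hφ : ∀ s : ℝ, φ s =
      a * s + (1 - s ^ 2) / (a * s + 2 * Real.sqrt (1 - s ^ 2)))
    (s : ℝ) (hs : |s| < 1)
    (hpos : 0 < a * s + 2 * Real.sqrt (1 - s ^ 2))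
    (hden : φ s - s * deriv φ s ≠ 0) :
    deriv φ s / (φ s - s * deriv φ s) =
      (3 * a / 2) * Real.sqrt (1 - s ^ 2) + ((a ^ 2 - 2) / 2) * s := by
  have hs2 : 0 < 1 - s ^ 2 := by
    have := abs_lt.mp hs
    nlinarith
  set t := Real.sqrt (1 - s ^ 2) with htdef
  have ht : 0 < t := Real.sqrt_pos.mpr hs2
  have ht2 : t ^ 2 = 1 - s ^ 2 := Real.sq_sqrt hs2.le
  have hfun : φ = fun x => a * x + (1 - x ^ 2) / (a * x + 2 * Real.sqrt (1 - x ^ 2)) :=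
    funext hφ
  have hpoly : HasDerivAt (fun x : ℝ => 1 - x ^ 2) (-(2 * s)) s := by
    simpa using ((hasDerivAt_pow 2 s).const_sub 1)
  have hsqrt : HasDerivAt (fun x : ℝ => Real.sqrt (1 - x ^ 2)) (-(2 * s) / (2 * t)) s :=
    hpoly.sqrt hs2.ne'
  have hD : HasDerivAt (fun x : ℝ => a * x + 2 * Real.sqrt (1 - x ^ 2))
      (a + 2 * (-(2 * s) / (2 * t))) s := by
    have h := ((hasDerivAt_id s).const_mul a).add (hsqrt.const_mul 2)
    simp only [mul_one] at h
    exact h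
  have hfrac : HasDerivAt (fun x : ℝ => (1 - x ^ 2) / (a * x + 2 * Real.sqrt (1 - x ^ 2)))
      ((-(2 * s) * (a * s + 2 * t) - (1 - s ^ 2) * (a + 2 * (-(2 * s) / (2 * t)))) /
        (a * s + 2 * t) ^ 2) s :=
    hpoly.div hD hpos.ne'
  have hφ' : HasDerivAt φ
      (a + (-(2 * s) * (a * s + 2 * t) - (1 - s ^ 2) * (a + 2 * (-(2 * s) / (2 * t)))) /
        (a * s + 2 * t) ^ 2) s := by
    rw [hfun]
    have h := ((hasDerivAt_id s).const_mul a).add hfrac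
    simp only [mul_one] at h
    exact h
  have hderiv := hφ'.deriv
  rw [div_eq_iff hden, hderiv, hφ s, ← htdef]
  field_simp
  linear_combination (((-128)*s^1*t^4 + (128)*s^3*t^4 + (64)*a^1*t^5 + (-192)*a^1*s^2*t^3 + (-192)*a^1*s^2*t^5 + (192)*a^1*s^4*t^3 + (96)*a^2*s^1*t^4 + (-96)*a^2*s^3*t^2 + (-352)*a^2*s^3*t^4 + (96)*a^2*s^5*t^2 + (48)*a^3*s^2*t^3 + (-16)*a^3*s^4*t^1 + (-240)*a^3*s^4*t^3 + (16)*a^3*s^6*t^1 + (8)*a^4*s^3*t^2 + (-72)*a^4*s^5*t^2 + (-8)*a^5*s^6*t^1) + ((-64)*a^1*t^5*s^0 + (192)*a^1*t^5*s^2 + (-96)*a^2*t^4*s^1 + (352)*a^2*t^4*s^3 + (128)*a^0*t^4*s^1 + (-128)*a^0*t^4*s^3 + (192)*a^1*t^3*s^2 + (-48)*a^3*t^3*s^2 + (240)*a^3*t^3*s^4 + (-192)*a^1*t^3*s^4 + (96)*a^2*t^2*s^3 + (-96)*a^2*t^2*s^5 + (-8)*a^4*t^2*s^3 + (72)*a^4*t^2*s^5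 + (2)*a^1*t^1*s^0 + (-6)*a^1*t^1*s^2 + (16)*a^3*t^1*s^4 + (-16)*a^3*t^1*s^6 + (8)*a^5*t^1*s^6 + (-2)*a^2*t^0*s^3 + (-4)*a^0*t^0*s^1 + (4)*a^0*t^0*s^3)) * ht2
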